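/- With the entry-node stack invariant above, for any range [l, r] the entry node (the index j ∈ [l, r] minimizing d_j, ties broken by smallest index) equals the smallest element of the stack q_r (the stack state after processing r) that is ≥ l. -/

import Mathlib

open scoped Classical

noncomputable def entryStack (d : ℕ → ℝ) : ℕ → List ℕ
  | 0 => [0]
  | i + 1 => (i + 1) :: (entryStack d i).dropWhile (fun j => decide (d i.succ < d j))

lemma mem_dropWhile_of_not {α} (p : α → Bool) :
    ∀ {l : List α} {x}, x ∈ l → p x = false → x ∈ l.dropWhile p
  | [], x, h, _ => absurd h List.not_mem_nil
  | a :: l, x, h, hx => by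
    by_cases hpa : p a = true
    · rw [List.dropWhile_cons_of_pos hpa]
      rcases List.mem_cons.1 h with rfl | h
      · rw [hpa] at hx; simp at hx
      · exact mem_dropWhile_of_not p h hx
    · rw [List.dropWhile_cons_of_neg hpa]; exact h

lemma entryStack_spec (d : ℕ → ℝ) (r : ℕ) :
    (entryStack d r).Pairwise (· > ·) ∧
    ∀ j ∈ entryStack d r, j ≤ r ∧ ∀ k, j ≤ k → k ≤ r → d j ≤ d k := by
  induction r with
  | zero =>
    refine ⟨by simp [entryStack], ?_⟩
    intro j hj
    simp [entryStack] at hj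
    subst hj
    exact ⟨le_refl 0, fun k hk hk' => by interval_cases k; rfl⟩
  | succ r ih =>
    obtain ⟨hsort, hmem⟩ := ih
    set p : ℕ → Bool := fun j => decide (d (r+1) < d j) with hp
    have hdw : entryStack d (r+1) = (r+1) :: (entryStack d r).dropWhile p := rfl
    have hsub : List.Sublist ((entryStack d r).dropWhile p) (entryStack d r) := List.dropWhile_sublist _
    have hmem' : ∀ j ∈ (entryStack d r).dropWhile p, j ≤ r ∧ ∀ k, j ≤ k → k ≤ r → d j ≤ d k :=
      fun j hj => hmem j (hsub.mem hj)
    have hdsort : ((entryStack d r).dropWhile p).Pairwise (· > ·) := hsort.sublist hsub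
    -- key: every element of dropWhile has d value ≤ d (r+1)
    have hkey : ∀ j ∈ (entryStack d r).dropWhile p, d j ≤ d (r+1) := by
      intro j hj
      have hne : (entryStack d r).dropWhile p ≠ [] := List.ne_nil_of_mem hj
      set h := ((entryStack d r).dropWhile p).head hne with hh
      have hph : p h = false := List.head_dropWhile_not p hne
      have hdh : d h ≤ d (r+1) := by
        have := of_decide_eq_false hph
        linarith [not_lt.mp this]
      have hjh : j ≤ h := by
        rcases List.mem_cons.1 (by rw [← List.cons_head_tail hne] at hj; exact hj) with rfl | hj'
        · exact le_refl _
        · have := hdsort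
          rw [← List.cons_head_tail hne] at this
          exact le_of_lt (List.rel_of_pairwise_cons this hj')
      have hhr : h ≤ r := (hmem' h (List.head_mem hne)).1
      have := (hmem' j hj).2 h hjh hhr
      linarith
    constructor
    · rw [hdw]
      refine List.pairwise_cons.mpr ⟨fun b hb => ?_, hdsort⟩
      have := (hmem' b hb).1; omega
    · intro j hj
      rw [hdw, List.mem_cons] at hj
      rcases hj with rfl | hj
      · exact ⟨le_refl _, fun k hk hk' => by have : k = r+1 := le_antisymm hk' hk; rw [this]⟩
      · obtain ⟨h1, h2⟩ := hmem' j hj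
        refine ⟨by omega, fun k hk hk' => ?_⟩
        rcases Nat.lt_succ_iff_lt_or_eq.mp (Nat.lt_succ_of_le hk') with hkr | rfl
        · exact h2 k hk (by omega)
        · exact hkey j hj

theorem entryStack_window_min (d : ℕ → ℝ) (hd : Function.Injective d)
    (l r j : ℕ) (hlj : l ≤ j) (hjr : j ≤ r)
    (hmin : ∀ k, l ≤ k → k ≤ r → d j ≤ d k) :
    j ∈ entryStack d r ∧ ∀ j' ∈ entryStack d r, l ≤ j' → j ≤ j' := by
  obtain ⟨hsort, hmem⟩ := entryStack_spec d r
  have hin : j ∈ entryStack d r := by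
    clear hsort hmem
    induction r with
    | zero => simp [entryStack]; omega
    | succ r ih =>
      rcases Nat.lt_succ_iff_lt_or_eq.mp (Nat.lt_succ_of_le hjr) with hjr' | rfl
      · have hjr'' : j ≤ r := by omega
        have : j ∈ entryStack d r := ih hjr'' (fun k hk hk' => hmin k hk (by omega))
        show j ∈ (r+1) :: (entryStack d r).dropWhile (fun j => decide (d (r+1) < d j))
        refine List.mem_cons_of_mem _ (mem_dropWhile_of_not _ this ?_)
        have := hmin (r+1) (by omega) (le_refl _)
        simp [not_lt.mpr this]
      · exact List.mem_cons_self
  refine ⟨hin, fun j' hj' hlj' => ?_⟩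
  by_contra hlt
  push_neg at hlt
  obtain ⟨hj'r, hj'min⟩ := hmem j' hj'
  have h1 : d j ≤ d j' := hmin j' hlj' hj'r
  have h2 : d j' ≤ d j := hj'min j (le_of_lt hlt) hjr
  have : j = j' := hd (le_antisymm h1 h2)
  omega
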